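/- There is no monotone cofinal map from ω^ω (with the coordinatewise order) to the poset κ^𝔡 (functions from the dominating number 𝔡 to an infinite cardinal κ, ordered coordinatewise). Consequently, for any infinite cardinal κ with ω^ω-dominated power, the least cardinal λ with ω^ω ⋡ κ^λ satisfies λ ≤ 𝔡. -/

import Mathlib

/-- The cardinal `c` viewed as a (well-ordered) poset: the ordinals below `c.ord`. -/
abbrev CardPoset (c : Cardinal) := {o : Ordinal // o < c.ord}

/-- The eventual domination preorder `≤*` on `ω^ω`. -/
def evLE (f g : ℕ → ℕ) : Prop := ∀ᶠ n in Filter.atTop, f n ≤ g n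

/-- The dominating number `𝔡`. -/
noncomputable def dNum : Cardinal :=
  sInf {c : Cardinal | ∃ D : Set (ℕ → ℕ), (∀ f : ℕ → ℕ, ∃ g ∈ D, evLE f g) ∧
    Cardinal.mk D = c}

theorem dNum_mem : ∃ D : Set (ℕ → ℕ), (∀ f : ℕ → ℕ, ∃ g ∈ D, evLE f g) ∧
    Cardinal.mk D = dNum := by
  have hne : {c : Cardinal | ∃ D : Set (ℕ → ℕ), (∀ f : ℕ → ℕ, ∃ g ∈ D, evLE f g) ∧
      Cardinal.mk D = c}.Nonempty :=
    ⟨Cardinal.mk (Set.univ : Set (ℕ → ℕ)), Set.univ,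
      fun f => ⟨f, trivial, Filter.Eventually.of_forall fun _ => le_rfl⟩, rfl⟩
  exact csInf_mem hne

theorem aleph0_le_dNum : Cardinal.aleph0 ≤ dNum := by
  obtain ⟨D, hD, hmk⟩ := dNum_mem
  by_contra h
  push_neg at h
  rw [← hmk] at h
  haveI : Fintype D := (Cardinal.lt_aleph0_iff_fintype.mp h).some
  set F : ℕ → ℕ := fun n => (Finset.univ.sup fun g : D => (g : ℕ → ℕ) n) + 1 with hF
  obtain ⟨d, hd, hdom⟩ := hD F
  obtain ⟨n, hn⟩ := hdom.exists
  have hle : d n ≤ Finset.univ.sup fun g : D => (g : ℕ → ℕ) n :=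
    Finset.le_sup (f := fun g : D => (g : ℕ → ℕ) n) (Finset.mem_univ (⟨d, hd⟩ : D))
  simp only [hF] at hn
  omega

/-- There is no monotone cofinal map from `ω^ω` to the poset `κ^𝔡` (functions from the
dominating number `𝔡` to an infinite cardinal `κ`, ordered coordinatewise); consequently
the least cardinal `λ` with `ω^ω ⋡ κ^λ` satisfies `λ ≤ 𝔡`. -/
theorem stmt_6 (κ : Cardinal.{0}) (hκ : Cardinal.aleph0 ≤ κ) :
    (¬ ∃ f : (ℕ → ℕ) → (CardPoset dNum → CardPoset κ),
        Monotone f ∧ ∀ g : CardPoset dNum → CardPoset κ, ∃ α : ℕ → ℕ, g ≤ f α) ∧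
    sInf {lam : Cardinal.{0} | ¬ ∃ f : (ℕ → ℕ) → (CardPoset lam → CardPoset κ),
        Monotone f ∧ ∀ g : CardPoset lam → CardPoset κ, ∃ α : ℕ → ℕ, g ≤ f α} ≤ dNum := by
  have hmain : ¬ ∃ f : (ℕ → ℕ) → (CardPoset dNum → CardPoset κ),
      Monotone f ∧ ∀ g : CardPoset dNum → CardPoset κ, ∃ α : ℕ → ℕ, g ≤ f α := by
    rintro ⟨f, hmono, hcof⟩
    obtain ⟨D, hD, hmk⟩ := dNum_mem
    -- cardinality of the index poset
    have hcardP : Cardinal.mk (CardPoset dNum) = Cardinal.lift.{1} dNum := by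
      have := Ordinal.mk_Iio_ordinal (dNum.ord)
      rw [Cardinal.card_ord] at this; exact this
    have hcardD : Cardinal.lift.{1} (Cardinal.mk (D × ℕ)) = Cardinal.lift.{1} dNum := by
      rw [Cardinal.mk_prod, Cardinal.mk_nat, Cardinal.lift_id, Cardinal.lift_id, hmk,
        Cardinal.mul_aleph0_eq aleph0_le_dNum]
    have hequiv : Nonempty (CardPoset dNum ≃ (D × ℕ)) := by
      rw [← Cardinal.lift_mk_eq']
      simp only [Cardinal.lift_id', hcardP]
      rw [← hcardD, Cardinal.mk_prod, Cardinal.mk_nat]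
    obtain ⟨e⟩ := hequiv
    -- pointwise-dominating family indexed by `CardPoset dNum`
    set β : CardPoset dNum → (ℕ → ℕ) := fun i => fun n => ((e i).1 : ℕ → ℕ) n + (e i).2
      with hβ
    have hlim : Order.IsSuccLimit (Cardinal.ord κ) := Cardinal.isSuccLimit_ord hκ
    set g : CardPoset dNum → CardPoset κ :=
      fun i => ⟨Order.succ ((f (β i) i).1), hlim.succ_lt (f (β i) i).2⟩ with hg
    obtain ⟨α, hα⟩ := hcof g
    obtain ⟨d, hd, hdom⟩ := hD α
    obtain ⟨N, hN⟩ := Filter.eventually_atTop.mp hdom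
    set c : ℕ := (Finset.range N).sup α with hc
    set i : CardPoset dNum := e.symm (⟨d, hd⟩, c) with hi
    have hβi : α ≤ β i := by
      intro n
      simp only [hβ, hi, Equiv.apply_symm_apply]
      by_cases hn : N ≤ n
      · exact le_add_right (hN n hn)
      · have : α n ≤ c := Finset.le_sup (Finset.mem_range.mpr (by omega))
        omega
    have h1 : g i ≤ f (β i) i := (hα i).trans (hmono hβi i)
    have h2 : Order.succ ((f (β i) i).1) ≤ (f (β i) i).1 := h1
    exact absurd (Order.succ_le_iff.mp h2) (lt_irrefl _)
  exact ⟨hmain, csInf_le' hmain⟩
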